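/- Suppose there exists an [n,k,d] quasi-perfect code C over GF(q) with covering radius 2, minimum distance d with 3 <= d <= 4, and length n <= (q^{n-k}-1)/(q-1) - 2. Then there exists an [n+1,k+1,3] quasi-perfect code over GF(q) with covering radius 2. -/

import Mathlib

set_option linter.unusedSectionVars false

section QPhelpers

variable {F : Type*} [Field F] [DecidableEq F] {n : ℕ}

lemma qp_dist_snoc (a b : Fin n → F) (α β : F) :
    hammingDist (Fin.snoc a α : Fin (n+1) → F) (Fin.snoc b β : Fin (n+1) → F) =
      hammingDist a b + if α = β then 0 else 1 := by
  classical
  have h1 : ∀ (x y : Fin (n+1) → F),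
      hammingDist x y = ∑ i : Fin (n+1), if x i ≠ y i then 1 else 0 :=
    fun x y => Finset.card_filter _ _
  have h2 : hammingDist a b = ∑ i : Fin n, if a i ≠ b i then 1 else 0 :=
    Finset.card_filter _ _
  rw [h1, Fin.sum_univ_castSucc, h2]
  simp only [Fin.snoc_castSucc, Fin.snoc_last]
  by_cases h : α = β <;> simp [h]

lemma qp_dist_add_right {ι : Type*} [Fintype ι] (a b t : ι → F) :
    hammingDist (a + t) (b + t) = hammingDist a b := by
  simp only [hammingDist, Pi.add_apply]
  congr 1
  apply Finset.filter_congr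
  intro i _
  simp

lemma qp_snoc_add (a b : Fin n → F) (α β : F) :
    ((Fin.snoc a α : Fin (n+1) → F) + (Fin.snoc b β : Fin (n+1) → F)) =
      (Fin.snoc (a + b) (α + β) : Fin (n+1) → F) := by
  funext i
  refine Fin.lastCases ?_ ?_ i <;> simp

lemma qp_snoc_smul (γ : F) (a : Fin n → F) (α : F) :
    (γ • (Fin.snoc a α : Fin (n+1) → F)) = (Fin.snoc (γ • a) (γ * α) : Fin (n+1) → F) := by
  funext i
  refine Fin.lastCases ?_ ?_ i <;> simp

lemma qp_snoc_zero : ((Fin.snoc (0 : Fin n → F) (0:F) : Fin (n+1) → F)) = 0 := by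
  funext i
  refine Fin.lastCases ?_ ?_ i <;> simp

end QPhelpers

/-- From an [n,k,d]_q quasi-perfect code with covering radius 2, 3 ≤ d ≤ 4 and
n ≤ (q^{n-k}-1)/(q-1) - 2, one obtains an [n+1,k+1,3]_q quasi-perfect code with
covering radius 2. -/
theorem stmt_3 {F : Type*} [Field F] [Fintype F] [DecidableEq F] {n k d : ℕ}
    (C : Submodule F (Fin n → F)) (hk : Module.finrank F C = k)
    (hd : IsLeast {m : ℕ | ∃ c1 ∈ C, ∃ c2 ∈ C, c1 ≠ c2 ∧ hammingDist c1 c2 = m} d)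
    (hd3 : 3 ≤ d) (hd4 : d ≤ 4)
    (hR : (⨆ x : Fin n → F, ⨅ c : C, hammingDist x (c : Fin n → F)) = 2)
    (hn : n ≤ (Fintype.card F ^ (n - k) - 1) / (Fintype.card F - 1) - 2) :
    ∃ C' : Submodule F (Fin (n + 1) → F),
      Module.finrank F C' = k + 1 ∧
      IsLeast {m : ℕ | ∃ c1 ∈ C', ∃ c2 ∈ C', c1 ≠ c2 ∧ hammingDist c1 c2 = m} 3 ∧
      (⨆ x : Fin (n + 1) → F, ⨅ c : C', hammingDist x (c : Fin (n + 1) → F)) = 2 := by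
  classical
  set q := Fintype.card F with hqdef
  have hq : 2 ≤ q := Fintype.one_lt_card
  haveI : Nonempty C := ⟨⟨0, C.zero_mem⟩⟩
  -- basic facts about infima over C
  have hinf_le : ∀ (x : Fin n → F) (c : C),
      (⨅ c : C, hammingDist x (c : Fin n → F)) ≤ hammingDist x (c : Fin n → F) :=
    fun x c => Nat.sInf_le ⟨c, rfl⟩
  have hinf_mem : ∀ x : Fin n → F, ∃ c : C,
      hammingDist x (c : Fin n → F) = ⨅ c : C, hammingDist x (c : Fin n → F) := by
    intro x
    exact Nat.sInf_mem (Set.range_nonempty (fun c : C => hammingDist x (c : Fin n → F)))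
  -- covering radius facts for C
  have hcov : ∀ x : Fin n → F, (⨅ c : C, hammingDist x (c : Fin n → F)) ≤ 2 := by
    intro x
    calc (⨅ c : C, hammingDist x (c : Fin n → F))
        ≤ ⨆ x : Fin n → F, ⨅ c : C, hammingDist x (c : Fin n → F) :=
          le_ciSup (f := fun x : Fin n → F => ⨅ c : C, hammingDist x (c : Fin n → F))
            (Set.Finite.bddAbove (Set.finite_range _)) x
      _ = 2 := hR
  obtain ⟨v, hv⟩ : ∃ v : Fin n → F, (⨅ c : C, hammingDist v (c : Fin n → F)) = 2 := by
    have h1 := Nat.sSup_mem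
      (Set.range_nonempty (fun x : Fin n → F => ⨅ c : C, hammingDist x (c : Fin n → F)))
      (Set.Finite.bddAbove (Set.finite_range _))
    rw [show sSup (Set.range fun x : Fin n → F => ⨅ c : C, hammingDist x (c : Fin n → F)) = 2
      from hR] at h1
    exact h1
  have hv2 : ∀ c ∈ C, 2 ≤ hammingDist v c := by
    intro c hc
    rw [← hv]
    exact hinf_le v ⟨c, hc⟩
  obtain ⟨c₀, hc₀⟩ := hinf_mem v
  rw [hv] at hc₀
  -- weight bound for nontrivial combinations with v
  have hwt : ∀ c ∈ C, ∀ γ : F, γ ≠ 0 → 2 ≤ hammingDist (c + γ • v) (0 : Fin n → F) := by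
    intro c hc γ hγ
    have hreg : ∀ i : Fin n, IsSMulRegular F γ := by
      intro i a b h
      exact mul_left_cancel₀ hγ (by simpa [smul_eq_mul] using h)
    have e1 : c + γ • v = γ • (γ⁻¹ • c + v) := by
      rw [smul_add, smul_inv_smul₀ hγ]
    have e2 : (0 : Fin n → F) = γ • (0 : Fin n → F) := (smul_zero γ).symm
    have e3 : hammingDist (c + γ • v) (0 : Fin n → F)
        = hammingDist (γ⁻¹ • c + v) (0 : Fin n → F) := by
      conv_lhs => rw [e1, e2]
      exact hammingDist_smul hreg
    have e4 : hammingDist (γ⁻¹ • c + v) (0 : Fin n → F)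
        = hammingDist v (-(γ⁻¹ • c)) := by
      have h5 := qp_dist_add_right (F := F) v (-(γ⁻¹ • c)) (γ⁻¹ • c)
      rw [neg_add_cancel] at h5
      rw [← h5, add_comm]
    rw [e3, e4]
    refine hv2 _ ?_
    exact C.neg_mem (C.smul_mem _ hc)
  -- n ≥ 3
  have hn3 : 3 ≤ n := by
    obtain ⟨c1, hc1, c2, hc2, hne, hdist⟩ := hd.1
    have hle : hammingDist c1 c2 ≤ n := by
      simpa using (hammingDist_le_card_fintype (x := c1) (y := c2))
    omega
  -- k ≤ n
  have hkn : k ≤ n := by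
    have h1 : Module.finrank F C ≤ Module.finrank F (Fin n → F) := C.finrank_le
    rwa [hk, Module.finrank_fin_fun] at h1
  -- arithmetic consequence of hn
  have hn' : 1 + (n+1)*(q-1) < q^(n-k) := by
    set m := n - k with hm
    have hm1 : 1 ≤ m := by
      rcases Nat.eq_zero_or_pos m with h0 | h1
      · rw [h0] at hn; simp at hn; omega
      · exact h1
    have hA : n + 2 ≤ (q^m - 1)/(q-1) := by omega
    have hB : (n+2)*(q-1) ≤ q^m - 1 :=
      (Nat.le_div_iff_mul_le (by omega : 0 < q - 1)).1 hA
    have hq_le : q ≤ q^m := Nat.le_self_pow (by omega) q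
    have e : (n+2)*(q-1) = (n+1)*(q-1) + (q-1) := by ring
    omega
  -- existence of a "deep" point avoiding C + F* v
  have hx0 : ∃ x : Fin n → F, (∀ c ∈ C, 2 ≤ hammingDist x c) ∧
      (∀ c ∈ C, ∀ α : F, α ≠ 0 → x ≠ c + α • v) := by
    by_contra hcon
    push_neg at hcon
    let Ψ : (C × (Option (Fin n × {a : F // a ≠ 0}) ⊕ {a : F // a ≠ 0})) → (Fin n → F) :=
      fun p =>
        match p.2 with
        | Sum.inl none => (p.1 : Fin n → F)
        | Sum.inl (some (i, a)) => Function.update (p.1 : Fin n → F) i ((p.1 : Fin n → F) i + a.1)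
        | Sum.inr a => (p.1 : Fin n → F) + a.1 • v
    have hsurj : Function.Surjective Ψ := by
      intro x
      by_cases hA : ∀ c ∈ C, 2 ≤ hammingDist x c
      · rcases hcon x hA with ⟨c, hc, α, hα, hx⟩
        exact ⟨⟨⟨c, hc⟩, Sum.inr ⟨α, hα⟩⟩, hx.symm⟩
      · push_neg at hA
        rcases hA with ⟨c, hc, hlt⟩
        have hcase : hammingDist x c = 0 ∨ hammingDist x c = 1 := by omega
        rcases hcase with h0 | h1
        · exact ⟨⟨⟨c, hc⟩, Sum.inl none⟩, (hammingDist_eq_zero.1 h0).symm⟩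
        · obtain ⟨i, hi⟩ := Finset.card_eq_one.1 h1
          have hxi : x i ≠ c i := by
            have hmem : i ∈ ({i} : Finset (Fin n)) := Finset.mem_singleton_self i
            rw [← hi] at hmem
            exact (Finset.mem_filter.1 hmem).2
          refine ⟨⟨⟨c, hc⟩, Sum.inl (some (i, ⟨x i - c i, sub_ne_zero.2 hxi⟩))⟩, ?_⟩
          funext j
          by_cases hj : j = i
          · subst hj
            simp [Ψ, Function.update_self]
          · have hxj : x j = c j := by
              by_contra hne
              have hmem : j ∈ ({i} : Finset (Fin n)) := by
                rw [← hi]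
                exact Finset.mem_filter.2 ⟨Finset.mem_univ _, hne⟩
              exact hj (Finset.mem_singleton.1 hmem)
            simp [Ψ, Function.update_of_ne hj, hxj]
    have hcard := Fintype.card_le_of_surjective Ψ hsurj
    have hC : Fintype.card C = q ^ k := by
      rw [Module.card_eq_pow_finrank (K := F) (V := C), hk]
    have hne0 : Fintype.card {a : F // a ≠ 0} = q - 1 := by
      rw [Fintype.card_subtype_compl, Fintype.card_subtype_eq]
    have hFn : Fintype.card (Fin n → F) = q ^ n := by
      rw [Fintype.card_fun, Fintype.card_fin]
    rw [Fintype.card_prod, Fintype.card_sum, Fintype.card_option, Fintype.card_prod,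
      Fintype.card_fin, hC, hne0, hFn] at hcard
    -- hcard : q ^ n ≤ q ^ k * ((n * (q-1) + 1) + (q-1))
    have hpow : q ^ n = q ^ k * q ^ (n - k) := by
      rw [← pow_add]
      congr 1
      omega
    have hqk : 0 < q ^ k := Nat.pow_pos (by omega)
    have hlt : q ^ k * ((n * (q-1) + 1) + (q-1)) < q ^ k * q ^ (n - k) := by
      refine mul_lt_mul_of_pos_left ?_ hqk
      calc n * (q-1) + 1 + (q-1) = 1 + (n+1)*(q-1) := by ring
        _ < q ^ (n-k) := hn'
    rw [hpow] at hcard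
    omega
  obtain ⟨x₀, hx₀A, hx₀B⟩ := hx0
  -- the linear map appending a zero coordinate
  let φ : (Fin n → F) →ₗ[F] (Fin (n+1) → F) :=
    { toFun := fun c => (Fin.snoc c 0 : Fin (n+1) → F)
      map_add' := fun a b => by rw [qp_snoc_add, add_zero]
      map_smul' := fun γ a => by rw [qp_snoc_smul, mul_zero]; rfl }
  have hφ : ∀ c : Fin n → F, φ c = (Fin.snoc c 0 : Fin (n+1) → F) := fun _ => rfl
  set w : Fin (n+1) → F := (Fin.snoc v 1 : Fin (n+1) → F) with hw
  set C' : Submodule F (Fin (n+1) → F) := (C.map φ) ⊔ (F ∙ w) with hC'def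
  haveI : Nonempty C' := ⟨⟨0, C'.zero_mem⟩⟩
  -- membership description
  have hmem : ∀ x : Fin (n+1) → F, x ∈ C' ↔
      ∃ c ∈ C, ∃ α : F, x = (Fin.snoc (c + α • v) α : Fin (n+1) → F) := by
    intro x
    constructor
    · intro hx
      rcases Submodule.mem_sup.1 hx with ⟨y, hy, z, hz, rfl⟩
      rcases Submodule.mem_map.1 hy with ⟨c, hc, rfl⟩
      rcases Submodule.mem_span_singleton.1 hz with ⟨α, rfl⟩
      refine ⟨c, hc, α, ?_⟩
      rw [hφ, hw, qp_snoc_smul, qp_snoc_add, zero_add, mul_one]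
    · rintro ⟨c, hc, α, rfl⟩
      apply Submodule.mem_sup.2
      refine ⟨φ c, Submodule.mem_map_of_mem hc, α • w,
        Submodule.smul_mem _ _ (Submodule.mem_span_singleton_self w), ?_⟩
      rw [hφ, hw, qp_snoc_smul, qp_snoc_add, zero_add, mul_one]
  refine ⟨C', ?_, ?_, ?_⟩
  · -- finrank
    have hφinj : Function.Injective φ := by
      intro a b h
      funext i
      have h2 := congrFun h (Fin.castSucc i)
      simpa [hφ, Fin.snoc_castSucc] using h2
    have hw0 : w ≠ 0 := by
      intro h
      have h2 := congrFun h (Fin.last n)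
      rw [hw] at h2
      simp [Fin.snoc_last] at h2
    have hdisj : (C.map φ) ⊓ (F ∙ w) = ⊥ := by
      rw [eq_bot_iff]
      rintro x hx
      rcases Submodule.mem_inf.1 hx with ⟨hx1, hx2⟩
      rcases Submodule.mem_span_singleton.1 hx2 with ⟨α, rfl⟩
      rcases Submodule.mem_map.1 hx1 with ⟨c, hc, hcx⟩
      have hα : α = 0 := by
        have h2 := congrFun hcx (Fin.last n)
        rw [hφ, hw] at h2
        simpa [Fin.snoc_last, Pi.smul_apply, smul_eq_mul] using h2.symm
      simp [hα]
    have h1 := Submodule.finrank_sup_add_finrank_inf_eq (C.map φ) (F ∙ w)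
    rw [hdisj, finrank_bot, add_zero] at h1
    have h2 : Module.finrank F (C.map φ) = k := by
      rw [← hk]
      exact (LinearEquiv.finrank_eq (Submodule.equivMapOfInjective φ hφinj C)).symm
    rw [hC'def, h1, h2, finrank_span_singleton hw0]
  · -- minimum distance is 3
    constructor
    · -- 3 is attained
      refine ⟨(Fin.snoc ((-(c₀ : Fin n → F)) + (1:F) • v) 1 : Fin (n+1) → F),
        (hmem _).2 ⟨-(c₀ : Fin n → F), C.neg_mem c₀.2, 1, rfl⟩, 0, C'.zero_mem, ?_, ?_⟩
      · intro h
        have h2 := congrFun h (Fin.last n)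
        simp [Fin.snoc_last] at h2
      · rw [← qp_snoc_zero, qp_dist_snoc, one_smul]
        have e1 : hammingDist ((-(c₀ : Fin n → F)) + v) (0 : Fin n → F)
            = hammingDist v (c₀ : Fin n → F) := by
          have h5 := qp_dist_add_right (F := F) v (c₀ : Fin n → F) (-(c₀ : Fin n → F))
          rw [add_neg_cancel] at h5
          rw [← h5, add_comm]
        rw [add_comm (-(c₀ : Fin n → F)) v] at e1
        rw [show (-(c₀ : Fin n → F)) + v = v + (-(c₀ : Fin n → F)) from add_comm _ _]
        rw [e1, hc₀]
        simp
    · -- 3 is a lower bound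
      rintro m ⟨x₁, hx₁, x₂, hx₂, hne, rfl⟩
      rcases (hmem x₁).1 hx₁ with ⟨c1, hc1, α, rfl⟩
      rcases (hmem x₂).1 hx₂ with ⟨c2, hc2, β, rfl⟩
      rw [qp_dist_snoc]
      by_cases hab : α = β
      · subst hab
        have hc12 : c1 ≠ c2 := by
          intro h
          exact hne (by rw [h])
        have e : hammingDist (c1 + α • v) (c2 + α • v) = hammingDist c1 c2 :=
          qp_dist_add_right c1 c2 (α • v)
        rw [if_pos rfl, add_zero, e]
        have hmd : hammingDist c1 c2 ∈
            {m : ℕ | ∃ c1 ∈ C, ∃ c2 ∈ C, c1 ≠ c2 ∧ hammingDist c1 c2 = m} :=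
          ⟨c1, hc1, c2, hc2, hc12, rfl⟩
        have := hd.2 hmd
        omega
      · rw [if_neg hab]
        have h2 : 2 ≤ hammingDist (c1 + α • v) (c2 + β • v) := by
          have h5 := qp_dist_add_right (F := F) ((c1 - c2) + (α - β) • v) 0 (c2 + β • v)
          have e1 : (c1 - c2) + (α - β) • v + (c2 + β • v) = c1 + α • v := by
            rw [sub_smul]
            abel
          have e2 : (0 : Fin n → F) + (c2 + β • v) = c2 + β • v := zero_add _
          rw [e1, e2] at h5
          rw [h5]
          exact hwt _ (C.sub_mem hc1 hc2) (α - β) (sub_ne_zero.2 hab)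
        omega
  · -- covering radius is 2
    have hub : ∀ x' : Fin (n+1) → F,
        (⨅ c : C', hammingDist x' (c : Fin (n+1) → F)) ≤ 2 := by
      intro x'
      set x : Fin n → F := Fin.init x' with hxdef
      set β : F := x' (Fin.last n) with hβdef
      obtain ⟨c, hcc⟩ := hinf_mem (x - β • v)
      have hcle : hammingDist (x - β • v) (c : Fin n → F) ≤ 2 := by
        rw [hcc]; exact hcov _
      have hwmem : (Fin.snoc ((c : Fin n → F) + β • v) β : Fin (n+1) → F) ∈ C' :=
        (hmem _).2 ⟨(c : Fin n → F), c.2, β, rfl⟩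
      have hdle : hammingDist x' (Fin.snoc ((c : Fin n → F) + β • v) β : Fin (n+1) → F) ≤ 2 := by
        conv_lhs => rw [← Fin.snoc_init_self x']
        rw [← hxdef, ← hβdef, qp_dist_snoc, if_pos rfl, add_zero]
        have h5 := qp_dist_add_right (F := F) (x - β • v) (c : Fin n → F) (β • v)
        rw [sub_add_cancel] at h5
        rw [h5]
        exact hcle
      exact le_trans (Nat.sInf_le ⟨⟨_, hwmem⟩, rfl⟩) hdle
    have hlb : 2 ≤ ⨅ c : C', hammingDist
        (Fin.snoc x₀ 0 : Fin (n+1) → F) (c : Fin (n+1) → F) := by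
      apply le_ciInf
      rintro ⟨c', hc'⟩
      rcases (hmem c').1 hc' with ⟨c, hc, α, rfl⟩
      simp only
      rw [qp_dist_snoc]
      by_cases hα : α = 0
      · subst hα
        rw [zero_smul, add_zero]
        have := hx₀A c hc
        omega
      · have h1 : x₀ ≠ c + α • v := hx₀B c hc α hα
        have h2 : 1 ≤ hammingDist x₀ (c + α • v) := by
          rcases Nat.eq_zero_or_pos (hammingDist x₀ (c + α • v)) with h0 | h0
          · exact absurd (hammingDist_eq_zero.1 h0) h1
          · exact h0
        rw [if_neg (by exact fun h => hα h.symm)]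
        omega
    refine le_antisymm (ciSup_le hub) ?_
    exact le_trans hlb
      (le_ciSup (f := fun x : Fin (n+1) → F => ⨅ c : C', hammingDist x (c : Fin (n+1) → F))
        (Set.Finite.bddAbove (Set.finite_range _)) (Fin.snoc x₀ 0))
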